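/- Let σ_1, …, σ_n be nonnegative reals and let ω_{t,i} (1 ≤ t ≤ n, 1 ≤ i ≤ k) be i.i.d. standard Gaussian N(0,1) random variables. If (i_1 < … < i_p) and (j_1 < … < j_p) are strictly increasing p-tuples in {1, …, k} whose index sets are disjoint (no repeated indices), then E[f_{i_1,…,j_p}] = (Σ_{t=1}^{n} σ_t^{2p})², i.e., E[f_{i_1,…,j_p}] = ‖A‖_{2p}^{4p} when σ_1, …, σ_n are the singular values of a matrix A. -/

import Mathlib

open scoped NNReal ENNReal
open Real


open MeasureTheory ProbabilityTheory

/-- The random variable `f_{i_1,…,j_p}` from the paper: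
`f = ∏_{h=1}^{p} (Σ_t σ_t² ω_{t,i_h} ω_{t,i_{h+1}}) (Σ_s σ_s² ω_{s,j_h} ω_{s,j_{h+1}})`,
with the cyclic conventions `i_{p+1} ≡ i_1` and `j_{p+1} ≡ j_1`. -/
noncomputable def fTerm {n k p : ℕ} [NeZero p] (σ : Fin n → ℝ) {Ω : Type}
    (ω : Fin n → Fin k → Ω → ℝ) (i j : Fin p → Fin k) (x : Ω) : ℝ :=
  ∏ h : Fin p,
    ((∑ t, σ t ^ 2 * ω t (i h) x * ω t (i (h + 1)) x) *
      (∑ s, σ s ^ 2 * ω s (j h) x * ω s (j (h + 1)) x))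


/- ### Gaussian moment lemmas -/

lemma pdf01 (x : ℝ) : gaussianPDFReal 0 1 x = (Real.sqrt (2 * π))⁻¹ * Real.exp (-(1/2) * x ^ 2) := by
  rw [gaussianPDFReal_def]
  push_cast
  rw [sub_zero, mul_one, mul_one]
  congr 1
  ring_nf

lemma smul_pdf (g : ℝ → ℝ) :
    (fun x => (Real.toNNReal (gaussianPDFReal 0 1 x) : ℝ≥0) • g x)
      = fun x => (Real.sqrt (2 * π))⁻¹ • (Real.exp (-(1/2) * x ^ 2) * g x) := by
  funext x
  simp only [NNReal.smul_def, smul_eq_mul]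
  rw [Real.coe_toNNReal _ (gaussianPDFReal_nonneg 0 1 x), pdf01]
  ring

lemma gauss_int (g : ℝ → ℝ) :
    ∫ y, g y ∂(gaussianReal 0 1) =
      (Real.sqrt (2 * π))⁻¹ * ∫ x, Real.exp (-(1/2) * x ^ 2) * g x := by
  rw [gaussianReal_of_var_ne_zero 0 one_ne_zero]
  have hd : (gaussianPDF 0 1) = fun x => ((Real.toNNReal (gaussianPDFReal 0 1 x) : ℝ≥0) : ℝ≥0∞) := by
    funext x; rfl
  rw [hd, integral_withDensity_eq_integral_smul
    ((measurable_gaussianPDFReal 0 1).real_toNNReal) g, smul_pdf g, integral_smul]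
  rfl

lemma gauss_integrable (g : ℝ → ℝ)
    (h : Integrable (fun x => Real.exp (-(1/2) * x ^ 2) * g x)) :
    Integrable g (gaussianReal 0 1) := by
  rw [gaussianReal_of_var_ne_zero 0 one_ne_zero]
  have hd : (gaussianPDF 0 1) = fun x => ((Real.toNNReal (gaussianPDFReal 0 1 x) : ℝ≥0) : ℝ≥0∞) := by
    funext x; rfl
  rw [hd, integrable_withDensity_iff_integrable_smul
    ((measurable_gaussianPDFReal 0 1).real_toNNReal), smul_pdf g]
  simp only [smul_eq_mul]
  exact h.const_mul _

lemma int_x_exp : ∫ x : ℝ, x * Real.exp (-(1/2) * x ^ 2) = 0 := by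
  have hderiv : ∀ x : ℝ, HasDerivAt (fun y : ℝ => -Real.exp (-(1/2) * y ^ 2))
      (x * Real.exp (-(1/2) * x ^ 2)) x := by
    intro x
    have h1 : HasDerivAt (fun y : ℝ => -(1/2) * y ^ 2) (-(1/2) * (2 * x)) x := by
      simpa using ((hasDerivAt_pow 2 x).const_mul (-(1/2) : ℝ))
    have h2 := (h1.exp).neg
    exact h2.congr_deriv (by ring)
  exact integral_eq_zero_of_hasDerivAt_of_integrable hderiv
    (integrable_mul_exp_neg_mul_sq (by norm_num))
    (integrable_exp_neg_mul_sq (by norm_num)).neg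

lemma int_sq_exp_aux : Integrable (fun x : ℝ => x ^ 2 * Real.exp (-(1/2) * x ^ 2)) := by
  have := integrable_rpow_mul_exp_neg_mul_sq (b := 1/2) (by norm_num) (s := 2) (by norm_num)
  simpa [Real.rpow_natCast] using this

lemma int_sq_exp : ∫ x : ℝ, x ^ 2 * Real.exp (-(1/2) * x ^ 2) = Real.sqrt (2 * π) := by
  have hsq := int_sq_exp_aux
  have he : Integrable (fun x : ℝ => Real.exp (-(1/2) * x ^ 2)) :=
    integrable_exp_neg_mul_sq (by norm_num)
  have hderiv : ∀ x : ℝ, HasDerivAt (fun y : ℝ => -(y * Real.exp (-(1/2) * y ^ 2)))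
      (x ^ 2 * Real.exp (-(1/2) * x ^ 2) - Real.exp (-(1/2) * x ^ 2)) x := by
    intro x
    have h1 : HasDerivAt (fun y : ℝ => -(1/2) * y ^ 2) (-(1/2) * (2 * x)) x := by
      simpa using ((hasDerivAt_pow 2 x).const_mul (-(1/2) : ℝ))
    have h2 := ((hasDerivAt_id x).mul h1.exp).neg
    exact h2.congr_deriv (by simp only [id_eq]; ring)
  have hzero : ∫ x : ℝ, (x ^ 2 * Real.exp (-(1/2) * x ^ 2) - Real.exp (-(1/2) * x ^ 2)) = 0 :=
    integral_eq_zero_of_hasDerivAt_of_integrable hderiv (hsq.sub he)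
      (integrable_mul_exp_neg_mul_sq (b := 1/2) (by norm_num)).neg
  rw [integral_sub hsq he] at hzero
  have hgauss : ∫ x : ℝ, Real.exp (-(1/2) * x ^ 2) = Real.sqrt (π / (1/2)) :=
    integral_gaussian (1/2)
  have h2 : Real.sqrt (π / (1/2)) = Real.sqrt (2 * π) := by norm_num [mul_comm]
  linarith [hzero, hgauss, h2]

lemma sqrt_two_pi_pos : (0:ℝ) < Real.sqrt (2 * π) :=
  Real.sqrt_pos.2 (by positivity)

/-- Moments of the standard Gaussian, for exponents `m ≤ 2`. -/
lemma gauss_moment {m : ℕ} (hm : m ≤ 2) :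
    ∫ y, y ^ m ∂(gaussianReal 0 1) = if m = 1 then 0 else 1 := by
  interval_cases m
  · simp
  · rw [if_pos rfl, gauss_int]
    have : ∀ x : ℝ, Real.exp (-(1/2) * x ^ 2) * x ^ 1 = x * Real.exp (-(1/2) * x ^ 2) := by
      intro x; ring
    simp only [this, int_x_exp, mul_zero]
  · rw [if_neg (by norm_num), gauss_int]
    have : ∀ x : ℝ, Real.exp (-(1/2) * x ^ 2) * x ^ 2 = x ^ 2 * Real.exp (-(1/2) * x ^ 2) := by
      intro x; ring
    simp only [this, int_sq_exp]
    rw [inv_mul_cancel₀ (ne_of_gt sqrt_two_pi_pos)]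

lemma gauss_moment_integrable {m : ℕ} (hm : m ≤ 2) :
    Integrable (fun y : ℝ => y ^ m) (gaussianReal 0 1) := by
  apply gauss_integrable
  interval_cases m
  · simpa using integrable_exp_neg_mul_sq (b := 1/2) (by norm_num)
  · have : ∀ x : ℝ, Real.exp (-(1/2) * x ^ 2) * x ^ 1 = x * Real.exp (-(1/2) * x ^ 2) := by
      intro x; ring
    simp only [this]
    exact integrable_mul_exp_neg_mul_sq (by norm_num)
  · have : ∀ x : ℝ, Real.exp (-(1/2) * x ^ 2) * x ^ 2 = x ^ 2 * Real.exp (-(1/2) * x ^ 2) := by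
      intro x; ring
    simp only [this]
    exact int_sq_exp_aux

/- ### Independence: expectation of a product -/

lemma indep_prod_integral {ι : Type*} {Ω : Type} [MeasureSpace Ω]
    [IsProbabilityMeasure (ℙ : Measure Ω)] {X : ι → Ω → ℝ}
    (hX : iIndepFun X ℙ)
    (hXm : ∀ i, Measurable (X i)) (hXi : ∀ i, Integrable (X i) ℙ) (s : Finset ι) :
    Integrable (fun x => ∏ i ∈ s, X i x) ℙ ∧
      (∫ x, ∏ i ∈ s, X i x ∂ℙ) = ∏ i ∈ s, ∫ x, X i x ∂ℙ := by
  classical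
  induction s using Finset.induction_on with
  | empty => simp
  | @insert a s ha ih =>
    have hind : IndepFun (∏ j ∈ s, X j) (X a) ℙ :=
      iIndepFun.indepFun_finset_prod_of_notMem hX hXm ha
    have hps : (∏ j ∈ s, X j) = fun x => ∏ j ∈ s, X j x := by
      funext x; simp [Finset.prod_apply]
    rw [hps] at hind
    have hint : Integrable (fun x => ∏ i ∈ insert a s, X i x) ℙ := by
      have := hind.symm.integrable_mul (hXi a) ih.1
      have hfun : (X a * fun x => ∏ j ∈ s, X j x) = fun x => ∏ i ∈ insert a s, X i x := by
        funext x; simp [Finset.prod_insert ha]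
      rwa [hfun] at this
    refine ⟨hint, ?_⟩
    have := hind.symm.integral_fun_mul_eq_mul_integral (hXi a).aestronglyMeasurable ih.1.aestronglyMeasurable
    have hfun : (fun x => X a x * ∏ j ∈ s, X j x) = fun x => ∏ i ∈ insert a s, X i x := by
      funext x; simp [Finset.prod_insert ha]
    rw [Finset.prod_insert ha, ← ih.2]
    calc ∫ x, ∏ i ∈ insert a s, X i x ∂ℙ = ∫ x, X a x * ∏ j ∈ s, X j x ∂ℙ := by rw [hfun]
    _ = _ := this

/- ### Counting machinery -/

/-- Number of `h` with `(a h, u h) = tc`. -/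
def cntP {n k p : ℕ} (a : Fin p → Fin n) (u : Fin p → Fin k) (tc : Fin n × Fin k) : ℕ :=
  (Finset.univ.filter (fun h => (a h, u h) = tc)).card

lemma prod_eq_pow_cnt {n k p : ℕ} {Ω : Type} (ω : Fin n → Fin k → Ω → ℝ)
    (a : Fin p → Fin n) (u : Fin p → Fin k) (x : Ω) :
    ∏ h, ω (a h) (u h) x = ∏ tc : Fin n × Fin k, (ω tc.1 tc.2 x) ^ cntP a u tc := by
  classical
  rw [← Finset.prod_fiberwise_of_maps_to (g := fun h => (a h, u h))
    (fun h _ => Finset.mem_univ ((a h, u h))) (fun h => ω (a h) (u h) x)]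
  refine Finset.prod_congr rfl fun tc _ => ?_
  calc ∏ h ∈ Finset.univ.filter (fun h => (a h, u h) = tc), ω (a h) (u h) x
      = ∏ _h ∈ Finset.univ.filter (fun h => (a h, u h) = tc), ω tc.1 tc.2 x := by
        refine Finset.prod_congr rfl fun h hh => ?_
        simp only [Finset.mem_filter] at hh
        rw [← hh.2]
    _ = _ := by rw [Finset.prod_const, cntP]

lemma cnt_le_one {n k p : ℕ} (a : Fin p → Fin n) {u : Fin p → Fin k}
    (hu : Function.Injective u) (tc : Fin n × Fin k) : cntP a u tc ≤ 1 := by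
  rw [cntP]
  refine Finset.card_le_one.2 fun h1 hh1 h2 hh2 => ?_
  simp only [Finset.mem_filter, Prod.ext_iff] at hh1 hh2
  exact hu (hh1.2.2.trans hh2.2.2.symm)

lemma cnt_eq_zero {n k p : ℕ} (a : Fin p → Fin n) (u : Fin p → Fin k)
    (tc : Fin n × Fin k) (h : ∀ h, u h ≠ tc.2) : cntP a u tc = 0 := by
  rw [cntP, Finset.card_eq_zero, Finset.filter_eq_empty_iff]
  intro h' _
  simp only [Prod.ext_iff]
  exact fun hc => h h' hc.2

lemma cnt_shift {n k p : ℕ} [NeZero p] (a : Fin p → Fin n) (u : Fin p → Fin k)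
    (ha : ∀ h, a (h + 1) = a h) (tc : Fin n × Fin k) :
    cntP a (fun h => u (h + 1)) tc = cntP a u tc := by
  rw [cntP, cntP]
  refine Finset.card_bij' (fun h _ => h + 1) (fun h _ => h - 1) ?_ ?_ ?_ ?_
  · intro h hh
    simp only [Finset.mem_filter, Prod.ext_iff] at hh ⊢
    exact ⟨Finset.mem_univ _, (ha h).trans hh.2.1, hh.2.2⟩
  · intro h hh
    simp only [Finset.mem_filter, Prod.ext_iff] at hh ⊢
    refine ⟨Finset.mem_univ _, ?_, ?_⟩
    · have := ha (h - 1)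
      rw [sub_add_cancel] at this
      rw [← this]; exact hh.2.1
    · rw [sub_add_cancel]; exact hh.2.2
  · intro h _; exact add_sub_cancel_right h 1
  · intro h _; exact sub_add_cancel h 1

open Fin.NatCast in
lemma shift_const {p : ℕ} [NeZero p] {α : Type*} (a : Fin p → α)
    (ha : ∀ h, a (h + 1) = a h) (h : Fin p) : a h = a 0 := by
  have key : ∀ m : ℕ, a (m : Fin p) = a 0 := by
    intro m
    induction m with
    | zero => norm_num
    | succ m ih =>
      have hc : ((m + 1 : ℕ) : Fin p) = (m : Fin p) + 1 := by push_cast; ring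
      rw [hc, ha, ih]
  have := key h.val
  rwa [Fin.cast_val_eq_self] at this

/-- The exponent of `ω tc.1 tc.2` in the monomial indexed by `(a, b)`. -/
def eExp {n k p : ℕ} [NeZero p] (i j : Fin p → Fin k) (a b : Fin p → Fin n)
    (tc : Fin n × Fin k) : ℕ :=
  cntP a i tc + cntP a (fun h => i (h + 1)) tc + cntP b j tc + cntP b (fun h => j (h + 1)) tc

lemma cnt_pair {n k p : ℕ} [NeZero p] (a : Fin p → Fin n) {u : Fin p → Fin k}
    (hu : Function.Injective u) {h₀ : Fin p} (hne : a (h₀ + 1) ≠ a h₀) :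
    cntP a u (a h₀, u (h₀ + 1)) = 0 ∧ cntP a (fun h => u (h + 1)) (a h₀, u (h₀ + 1)) = 1 := by
  constructor
  · rw [cntP, Finset.card_eq_zero, Finset.filter_eq_empty_iff]
    intro h _
    rw [Prod.ext_iff]
    rintro ⟨hc1, hc2⟩
    have hh : h = h₀ + 1 := hu hc2
    subst hh
    exact hne hc1
  · rw [cntP]
    have hfe : Finset.univ.filter
        (fun h => ((a h, u (h + 1)) : Fin n × Fin k) = (a h₀, u (h₀ + 1))) = {h₀} := by
      ext h
      simp only [Finset.mem_filter, Finset.mem_univ, true_and, Finset.mem_singleton,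
        Prod.ext_iff]
      constructor
      · rintro ⟨hc1, hc2⟩
        exact add_right_cancel (hu hc2)
      · rintro rfl
        exact ⟨rfl, rfl⟩
    rw [hfe, Finset.card_singleton]

/-- If the index sets of the two strictly increasing `p`-tuples are
disjoint (no repeated index), then `E[f_{i_1,…,j_p}] = (Σ_t σ_t^{2p})² = ‖A‖_{2p}^{4p}`. -/
theorem stmt9 {n k p : ℕ} [NeZero p] (σ : Fin n → ℝ) (hσ : ∀ t, 0 ≤ σ t)
    {Ω : Type} [MeasureSpace Ω] [IsProbabilityMeasure (ℙ : Measure Ω)]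
    (ω : Fin n → Fin k → Ω → ℝ)
    (hmeas : ∀ t i, Measurable (ω t i))
    (hgauss : ∀ t i, Measure.map (ω t i) ℙ = gaussianReal 0 1)
    (hindep : iIndepFun
      (fun ti : Fin n × Fin k => ω ti.1 ti.2) ℙ)
    (i j : Fin p → Fin k) (hi : StrictMono i) (hj : StrictMono j)
    (hdisj : ∀ a b, i a ≠ j b) :
    ∫ x, fTerm σ ω i j x ∂ℙ = (∑ t, σ t ^ (2 * p)) ^ 2 := by
  classical
  have hii : Function.Injective i := hi.injective
  have hji : Function.Injective j := hj.injective
  have hi'i : Function.Injective (fun h => i (h + 1)) := fun x y hxy =>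
    add_right_cancel (hii hxy)
  have hj'i : Function.Injective (fun h => j (h + 1)) := fun x y hxy =>
    add_right_cancel (hji hxy)
  -- exponents are at most 2
  have hrange : ∀ (a b : Fin p → Fin n) (tc : Fin n × Fin k), eExp i j a b tc ≤ 2 := by
    intro a b tc
    rw [eExp]
    by_cases hc : ∃ h, i h = tc.2
    · have hz1 : cntP b j tc = 0 := cnt_eq_zero _ _ _ (fun h hh => by
        obtain ⟨h0, hh0⟩ := hc; exact hdisj h0 h (hh0.trans hh.symm))
      have hz2 : cntP b (fun h => j (h + 1)) tc = 0 := cnt_eq_zero _ _ _ (fun h hh => by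
        obtain ⟨h0, hh0⟩ := hc; exact hdisj h0 (h + 1) (hh0.trans hh.symm))
      have hb1 := cnt_le_one a hii tc
      have hb2 := cnt_le_one a hi'i tc
      omega
    · have hz1 : cntP a i tc = 0 := cnt_eq_zero _ _ _ (fun h hh => hc ⟨h, hh⟩)
      have hz2 : cntP a (fun h => i (h + 1)) tc = 0 := cnt_eq_zero _ _ _
        (fun h hh => hc ⟨h + 1, hh⟩)
      have hb1 := cnt_le_one b hji tc
      have hb2 := cnt_le_one b hj'i tc
      omega
  -- moments of the coordinates
  have momΩ : ∀ (t : Fin n) (c : Fin k) (m : ℕ), m ≤ 2 →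
      ∫ x, (ω t c x) ^ m ∂ℙ = if m = 1 then 0 else 1 := by
    intro t c m hm
    have h1 : ∫ y, y ^ m ∂(Measure.map (ω t c) ℙ) = ∫ x, (ω t c x) ^ m ∂ℙ :=
      integral_map (hmeas t c).aemeasurable (measurable_id.pow_const m).aestronglyMeasurable
    rw [← h1, hgauss t c, gauss_moment hm]
  have intΩ : ∀ (t : Fin n) (c : Fin k) (m : ℕ), m ≤ 2 →
      Integrable (fun x => (ω t c x) ^ m) ℙ := by
    intro t c m hm
    have h2 : Integrable (fun y : ℝ => y ^ m) (Measure.map (ω t c) ℙ) := by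
      rw [hgauss t c]; exact gauss_moment_integrable hm
    exact (integrable_map_measure (measurable_id.pow_const m).aestronglyMeasurable
      (hmeas t c).aemeasurable).1 h2
  -- expectation of each monomial
  have term_int : ∀ a b : Fin p → Fin n,
      Integrable (fun x => ∏ tc : Fin n × Fin k, (ω tc.1 tc.2 x) ^ eExp i j a b tc) ℙ ∧
      (∫ x, ∏ tc : Fin n × Fin k, (ω tc.1 tc.2 x) ^ eExp i j a b tc ∂ℙ)
        = ∏ tc : Fin n × Fin k, (if eExp i j a b tc = 1 then (0:ℝ) else 1) := by
    intro a b
    have hcomp : iIndepFun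
        (fun tc : Fin n × Fin k => fun x => (ω tc.1 tc.2 x) ^ eExp i j a b tc) ℙ :=
      hindep.comp (fun tc (y : ℝ) => y ^ eExp i j a b tc)
        (fun tc => measurable_id.pow_const _)
    have hm' : ∀ tc : Fin n × Fin k, Measurable fun x => (ω tc.1 tc.2 x) ^ eExp i j a b tc :=
      fun tc => (hmeas tc.1 tc.2).pow_const _
    have hint' : ∀ tc : Fin n × Fin k,
        Integrable (fun x => (ω tc.1 tc.2 x) ^ eExp i j a b tc) ℙ :=
      fun tc => intΩ tc.1 tc.2 _ (hrange a b tc)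
    obtain ⟨h1, h2⟩ := indep_prod_integral hcomp hm' hint' Finset.univ
    exact ⟨h1, h2.trans (Finset.prod_congr rfl fun tc _ => momΩ tc.1 tc.2 _ (hrange a b tc))⟩
  -- pointwise expansion of fTerm into monomials
  have expand : ∀ x, fTerm σ ω i j x
      = ∑ a ∈ Fintype.piFinset (fun _ : Fin p => (Finset.univ : Finset (Fin n))),
          ∑ b ∈ Fintype.piFinset (fun _ : Fin p => (Finset.univ : Finset (Fin n))),
          ((∏ h, σ (a h) ^ 2) * (∏ h, σ (b h) ^ 2))
            * ∏ tc : Fin n × Fin k, (ω tc.1 tc.2 x) ^ eExp i j a b tc := by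
    intro x
    rw [fTerm, Finset.prod_mul_distrib, Finset.prod_univ_sum, Finset.prod_univ_sum,
      Finset.sum_mul_sum]
    refine Finset.sum_congr rfl fun a _ => Finset.sum_congr rfl fun b _ => ?_
    have h1 : (∏ h, σ (a h) ^ 2 * ω (a h) (i h) x * ω (a h) (i (h + 1)) x)
        = (∏ h, σ (a h) ^ 2) * ((∏ h, ω (a h) (i h) x) * (∏ h, ω (a h) (i (h + 1)) x)) := by
      rw [← Finset.prod_mul_distrib, ← Finset.prod_mul_distrib]
      exact Finset.prod_congr rfl fun h _ => by ring
    have h2 : (∏ h, σ (b h) ^ 2 * ω (b h) (j h) x * ω (b h) (j (h + 1)) x)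
        = (∏ h, σ (b h) ^ 2) * ((∏ h, ω (b h) (j h) x) * (∏ h, ω (b h) (j (h + 1)) x)) := by
      rw [← Finset.prod_mul_distrib, ← Finset.prod_mul_distrib]
      exact Finset.prod_congr rfl fun h _ => by ring
    rw [h1, h2, prod_eq_pow_cnt ω a i x, prod_eq_pow_cnt ω a (fun h => i (h + 1)) x,
      prod_eq_pow_cnt ω b j x, prod_eq_pow_cnt ω b (fun h => j (h + 1)) x]
    have h3 : ((∏ tc : Fin n × Fin k, (ω tc.1 tc.2 x) ^ cntP a i tc)
          * (∏ tc : Fin n × Fin k, (ω tc.1 tc.2 x) ^ cntP a (fun h => i (h + 1)) tc))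
        * ((∏ tc : Fin n × Fin k, (ω tc.1 tc.2 x) ^ cntP b j tc)
          * (∏ tc : Fin n × Fin k, (ω tc.1 tc.2 x) ^ cntP b (fun h => j (h + 1)) tc))
        = ∏ tc : Fin n × Fin k, (ω tc.1 tc.2 x) ^ eExp i j a b tc := by
      rw [← Finset.prod_mul_distrib, ← Finset.prod_mul_distrib, ← Finset.prod_mul_distrib]
      refine Finset.prod_congr rfl fun tc _ => ?_
      rw [eExp, pow_add, pow_add, pow_add]
      ring
    rw [← h3]
    ring
  -- evaluation of the moment products
  have heval : ∀ a b : Fin p → Fin n,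
      (∏ tc : Fin n × Fin k, (if eExp i j a b tc = 1 then (0:ℝ) else 1))
        = (if ∀ h, a (h + 1) = a h then (1:ℝ) else 0)
          * (if ∀ h, b (h + 1) = b h then (1:ℝ) else 0) := by
    intro a b
    by_cases hA : ∀ h, a (h + 1) = a h
    · by_cases hB : ∀ h, b (h + 1) = b h
      · rw [if_pos hA, if_pos hB, mul_one]
        refine Finset.prod_eq_one fun tc _ => ?_
        rw [if_neg]
        have e1 := cnt_shift a i hA tc
        have e2 := cnt_shift b j hB tc
        rw [eExp]
        omega
      · rw [if_neg hB, mul_zero]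
        push_neg at hB
        obtain ⟨h₀, hb⟩ := hB
        refine Finset.prod_eq_zero (Finset.mem_univ ((b h₀, j (h₀ + 1)) : Fin n × Fin k)) ?_
        rw [if_pos]
        obtain ⟨hc1, hc2⟩ := cnt_pair b hji hb
        have hz1 : cntP a i (b h₀, j (h₀ + 1)) = 0 :=
          cnt_eq_zero _ _ _ (fun h hh => hdisj h (h₀ + 1) hh)
        have hz2 : cntP a (fun h => i (h + 1)) (b h₀, j (h₀ + 1)) = 0 :=
          cnt_eq_zero _ _ _ (fun h hh => hdisj (h + 1) (h₀ + 1) hh)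
        rw [eExp]
        omega
    · rw [if_neg hA, zero_mul]
      push_neg at hA
      obtain ⟨h₀, ha⟩ := hA
      refine Finset.prod_eq_zero (Finset.mem_univ ((a h₀, i (h₀ + 1)) : Fin n × Fin k)) ?_
      rw [if_pos]
      obtain ⟨hc1, hc2⟩ := cnt_pair a hii ha
      have hz1 : cntP b j (a h₀, i (h₀ + 1)) = 0 :=
        cnt_eq_zero _ _ _ (fun h hh => hdisj (h₀ + 1) h hh.symm)
      have hz2 : cntP b (fun h => j (h + 1)) (a h₀, i (h₀ + 1)) = 0 :=
        cnt_eq_zero _ _ _ (fun h hh => hdisj (h₀ + 1) (h + 1) hh.symm)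
      rw [eExp]
      omega
  -- the sum over constant tuples
  have hone : ∀ c : Fin p → Fin n → ℝ,
      True := fun _ => trivial
  have hconst : ∑ a : Fin p → Fin n,
      (if ∀ h, a (h + 1) = a h then (∏ h, σ (a h) ^ 2) else 0) = ∑ t, σ t ^ (2 * p) := by
    rw [← Finset.sum_filter]
    have himg : Finset.univ.filter (fun a : Fin p → Fin n => ∀ h, a (h + 1) = a h)
        = Finset.image (fun t : Fin n => (fun _ : Fin p => t)) Finset.univ := by
      ext a
      simp only [Finset.mem_filter, Finset.mem_image, Finset.mem_univ, true_and]
      constructor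
      · intro ha
        exact ⟨a 0, funext fun h => (shift_const a ha h).symm⟩
      · rintro ⟨t, rfl⟩ h
        rfl
    rw [himg, Finset.sum_image (fun t _ t' _ hce => congrFun hce 0)]
    refine Finset.sum_congr rfl fun t _ => ?_
    rw [Finset.prod_const, Finset.card_univ, Fintype.card_fin, ← pow_mul, mul_comm]
  -- put everything together
  have hAint : ∀ a b : Fin p → Fin n,
      Integrable (fun x => ((∏ h, σ (a h) ^ 2) * (∏ h, σ (b h) ^ 2))
        * ∏ tc : Fin n × Fin k, (ω tc.1 tc.2 x) ^ eExp i j a b tc) ℙ :=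
    fun a b => (term_int a b).1.const_mul _
  calc ∫ x, fTerm σ ω i j x ∂ℙ
      = ∫ x, ∑ a ∈ Fintype.piFinset (fun _ : Fin p => (Finset.univ : Finset (Fin n))),
          ∑ b ∈ Fintype.piFinset (fun _ : Fin p => (Finset.univ : Finset (Fin n))),
          ((∏ h, σ (a h) ^ 2) * (∏ h, σ (b h) ^ 2))
            * ∏ tc : Fin n × Fin k, (ω tc.1 tc.2 x) ^ eExp i j a b tc ∂ℙ := by
        exact integral_congr_ae (Filter.Eventually.of_forall expand)
    _ = ∑ a ∈ Fintype.piFinset (fun _ : Fin p => (Finset.univ : Finset (Fin n))),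
          ∑ b ∈ Fintype.piFinset (fun _ : Fin p => (Finset.univ : Finset (Fin n))),
          ((∏ h, σ (a h) ^ 2) * (∏ h, σ (b h) ^ 2))
            * ∏ tc : Fin n × Fin k, (if eExp i j a b tc = 1 then (0:ℝ) else 1) := by
        rw [integral_finset_sum _ (fun a _ => integrable_finset_sum _ (fun b _ => hAint a b))]
        refine Finset.sum_congr rfl fun a _ => ?_
        rw [integral_finset_sum _ (fun b _ => hAint a b)]
        refine Finset.sum_congr rfl fun b _ => ?_
        rw [MeasureTheory.integral_const_mul, (term_int a b).2]
    _ = (∑ a : Fin p → Fin n, (if ∀ h, a (h + 1) = a h then (∏ h, σ (a h) ^ 2) else 0))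
          * (∑ b : Fin p → Fin n, (if ∀ h, b (h + 1) = b h then (∏ h, σ (b h) ^ 2) else 0)) := by
        rw [Finset.sum_mul_sum, Fintype.piFinset_univ]
        refine Finset.sum_congr rfl fun a _ => Finset.sum_congr rfl fun b _ => ?_
        rw [heval a b]
        by_cases hA : ∀ h, a (h + 1) = a h <;> by_cases hB : ∀ h, b (h + 1) = b h <;>
          simp [hA, hB]
    _ = (∑ t, σ t ^ (2 * p)) ^ 2 := by
        rw [hconst, sq]
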